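/- Fix M > 0 and L > 2M, and let x be real with M < x ≤ L/2. Then ((x−M)/(x+M)) · ∏_{n=1}^∞ [ (x+nL−M)(nL−x−M) / ( (x+nL+M)(nL−x+M) ) ] · exp(4M/(nL)) = exp(4γM/L) · Γ((x+M)/L) Γ(1 − (x−M)/L) / ( Γ((x−M)/L) Γ(1 − (x+M)/L) ), where γ is the Euler–Mascheroni constant and Γ is the Gamma function. Equivalently, the periodic Schwarzschild Ernst potential on the symmetry axis ρ = 0 is given by this Gamma-function expression for M ≤ |x| ≤ L/2. -/

import Mathlib

open Filter Real Finset Topology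


lemma aux_log_bound {t r : ℝ} (h1 : |t| ≤ r) (h2 : r < 1) :
    |Real.log (1 + t) - t| ≤ t ^ 2 / (1 - r) := by
  obtain ⟨hl, hr⟩ := abs_le.mp h1
  have h1r : 0 < 1 - r := by linarith
  have hpos : 0 < 1 + t := by linarith
  have hle : Real.log (1 + t) ≤ t := by
    have := Real.log_le_sub_one_of_pos hpos; linarith
  have hge : t / (1 + t) ≤ Real.log (1 + t) := by
    have h := Real.log_le_sub_one_of_pos (show (0:ℝ) < (1 + t)⁻¹ by positivity)
    rw [Real.log_inv] at h
    have e : (1 + t)⁻¹ - 1 = -(t / (1 + t)) := by field_simp; ring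
    rw [e] at h; linarith
  rw [abs_of_nonpos (by linarith)]
  have e1 : t - t / (1 + t) = t ^ 2 / (1 + t) := by field_simp; ring
  have e2 : t ^ 2 / (1 + t) ≤ t ^ 2 / (1 - r) := by
    rw [div_le_div_iff₀ hpos h1r]; nlinarith
  linarith

lemma aux_summable_log {c : ℝ} (hc : |c| < 1) :
    Summable (fun n : ℕ ↦ Real.log (1 + c / ((n : ℝ) + 1)) - c / ((n : ℝ) + 1)) := by
  rw [← summable_neg_iff]
  have hbase : Summable (fun n : ℕ ↦ 1 / ((n : ℝ) + 1) ^ 2) := by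
    have h2 : Summable (fun n : ℕ ↦ 1 / (n : ℝ) ^ 2) := by
      simpa using Real.summable_one_div_nat_pow.mpr (by norm_num : 1 < 2)
    have := (summable_nat_add_iff 1).mpr h2
    refine this.congr fun n => ?_
    push_cast; ring
  refine Summable.of_nonneg_of_le (fun n => ?_) (fun n => ?_)
    (hbase.mul_left (c ^ 2 / (1 - |c|)))
  · have ht : |c / ((n : ℝ) + 1)| < 1 := by
      rw [abs_div]
      have hn : (1:ℝ) ≤ |(n : ℝ) + 1| := by
        rw [abs_of_pos (by positivity)]; simp
      calc |c| / |(n : ℝ) + 1| ≤ |c| / 1 := by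
            apply div_le_div_of_nonneg_left (abs_nonneg c) one_pos hn |>.trans_eq rfl
          _ < 1 := by simpa using hc
    have hpos : 0 < 1 + c / ((n : ℝ) + 1) := by
      have := neg_lt_of_abs_lt ht; linarith
    have := Real.log_le_sub_one_of_pos hpos
    linarith
  · set t := c / ((n : ℝ) + 1) with ht_def
    have htle : |t| ≤ |c| := by
      rw [ht_def, abs_div]
      have hn : (1:ℝ) ≤ |(n : ℝ) + 1| := by
        rw [abs_of_pos (by positivity)]; simp
      calc |c| / |(n : ℝ) + 1| ≤ |c| / 1 :=
            div_le_div_of_nonneg_left (abs_nonneg c) one_pos hn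
          _ = |c| := div_one _
    have hb := aux_log_bound htle hc
    have : -(Real.log (1 + t) - t) ≤ |Real.log (1 + t) - t| := neg_le_abs _
    calc -(Real.log (1 + t) - t) ≤ t ^ 2 / (1 - |c|) := le_trans this hb
      _ = c ^ 2 / (1 - |c|) * (1 / ((n : ℝ) + 1) ^ 2) := by
          rw [ht_def]; field_simp [div_pow]

lemma aux_frac (E1 E2 E3 E4 F Q1 Q2 Q3 Q4 : ℝ) (hE3 : E3 ≠ 0) (hE4 : E4 ≠ 0) (hF : F ≠ 0)
    (hQ1 : Q1 ≠ 0) (hQ2 : Q2 ≠ 0) (hQ3 : Q3 ≠ 0) (hQ4 : Q4 ≠ 0) :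
    (E1 * F / Q1) * (E2 * F / Q2) / ((E3 * F / Q3) * (E4 * F / Q4))
      = (E1 * E2 / (E3 * E4)) * ((Q3 * Q4) / (Q1 * Q2)) := by
  field_simp


set_option maxHeartbeats 2000000 in
theorem statement11 (M L : ℝ) (hM : 0 < M) (hL : 2*M < L) (x : ℝ)
    (hx1 : M < x) (hx2 : x ≤ L/2) :
    ((x - M)/(x + M)) * ∏' n : ℕ,
      ((x + ((n : ℝ) + 1) * L - M) * (((n : ℝ) + 1) * L - x - M) /
        ((x + ((n : ℝ) + 1) * L + M) * (((n : ℝ) + 1) * L - x + M)) *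
        Real.exp (4*M / (((n : ℝ) + 1) * L)))
    = Real.exp (4 * Real.eulerMascheroniConstant * M / L) *
      (Real.Gamma ((x + M)/L) * Real.Gamma (1 - (x - M)/L)) /
      (Real.Gamma ((x - M)/L) * Real.Gamma (1 - (x + M)/L)) := by
  have hL0 : 0 < L := by linarith
  set a : ℝ := (x + M)/L with ha_def
  set b : ℝ := (x - M)/L with hb_def
  have ha0 : 0 < a := div_pos (by linarith) hL0
  have hb0 : 0 < b := div_pos (by linarith) hL0
  have hba : b < a := by rw [ha_def, hb_def]; gcongr; linarith
  have ha1 : a < 1 := by rw [ha_def, div_lt_one hL0]; linarith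
  have hb1 : b < 1 := by rw [hb_def, div_lt_one hL0]; linarith
  set γ : ℝ := Real.eulerMascheroniConstant with hγ_def
  set f : ℕ → ℝ := fun n =>
    (((n : ℝ) + 1 + b) * (((n : ℝ) + 1) - a)) / ((((n : ℝ) + 1) + a) * (((n : ℝ) + 1) - b)) *
      Real.exp (2 * (a - b) / ((n : ℝ) + 1)) with hf_def
  have hm1 : ∀ n : ℕ, (1 : ℝ) ≤ (n : ℝ) + 1 := fun n => by
    have : (0:ℝ) ≤ (n:ℝ) := Nat.cast_nonneg n; linarith
  -- rewrite the product terms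
  have hterm : (fun n : ℕ =>
      (x + ((n : ℝ) + 1) * L - M) * (((n : ℝ) + 1) * L - x - M) /
        ((x + ((n : ℝ) + 1) * L + M) * (((n : ℝ) + 1) * L - x + M)) *
        Real.exp (4*M / (((n : ℝ) + 1) * L))) = f := by
    funext n
    have h1 := hm1 n
    set m : ℝ := (n : ℝ) + 1 with hm_def
    have hmL : L ≤ m * L := le_mul_of_one_le_left hL0.le h1
    have hd1 : 0 < x + m * L + M := by linarith
    have hd2 : 0 < m * L - x + M := by linarith
    have hd3 : 0 < m + a := by linarith
    have hd4 : 0 < m - b := by linarith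
    simp only [hf_def]
    congr 1
    · rw [ha_def, hb_def, div_eq_div_iff (by positivity) (by positivity)]
      field_simp
      ring
    · congr 1
      rw [ha_def, hb_def]
      field_simp
      ring
  rw [hterm]
  -- positivity
  have hfpos : ∀ n, 0 < f n := fun n => by
    have h1 := hm1 n
    exact mul_pos (div_pos (mul_pos (by linarith) (by linarith))
      (mul_pos (by linarith) (by linarith))) (Real.exp_pos _)
  -- logarithm of the terms
  have hflog : ∀ n : ℕ, Real.log (f n) =
      (Real.log (1 + b / ((n : ℝ) + 1)) - b / ((n : ℝ) + 1))
      - (Real.log (1 + a / ((n : ℝ) + 1)) - a / ((n : ℝ) + 1))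
      + (Real.log (1 + (-a) / ((n : ℝ) + 1)) - (-a) / ((n : ℝ) + 1))
      - (Real.log (1 + (-b) / ((n : ℝ) + 1)) - (-b) / ((n : ℝ) + 1)) := by
    intro n
    have h1 := hm1 n
    set m : ℝ := (n : ℝ) + 1 with hm_def
    have hm0 : 0 < m := by linarith
    have hmb : 0 < m + b := by linarith
    have hma : 0 < m + a := by linarith
    have hmb' : 0 < m - b := by linarith
    have hma' : 0 < m - a := by linarith
    have e1 : (1 : ℝ) + b / m = (m + b) / m := by field_simp
    have e2 : (1 : ℝ) + a / m = (m + a) / m := by field_simp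
    have e3 : (1 : ℝ) + (-a) / m = (m - a) / m := by field_simp; ring
    have e4 : (1 : ℝ) + (-b) / m = (m - b) / m := by field_simp; ring
    simp only [hf_def]
    rw [Real.log_mul (div_pos (mul_pos hmb hma') (mul_pos hma hmb')).ne'
        (Real.exp_ne_zero _), Real.log_exp,
      Real.log_div (mul_pos hmb hma').ne' (mul_pos hma hmb').ne',
      Real.log_mul hmb.ne' hma'.ne', Real.log_mul hma.ne' hmb'.ne',
      e1, e2, e3, e4,
      Real.log_div hmb.ne' hm0.ne', Real.log_div hma.ne' hm0.ne',
      Real.log_div hma'.ne' hm0.ne', Real.log_div hmb'.ne' hm0.ne']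
    ring
  -- summability of logs
  have hsum : Summable (fun n : ℕ => Real.log (f n)) := by
    have h1 := aux_summable_log (c := b) (by rwa [abs_of_pos hb0])
    have h2 := aux_summable_log (c := a) (by rwa [abs_of_pos ha0])
    have h3 := aux_summable_log (c := -a) (by rwa [abs_neg, abs_of_pos ha0])
    have h4 := aux_summable_log (c := -b) (by rwa [abs_neg, abs_of_pos hb0])
    exact (((h1.sub h2).add h3).sub h4).congr fun n => (hflog n).symm
  -- multipliability
  have hmult : Multipliable f := by
    refine ⟨Real.exp (∑' n, Real.log (f n)), ?_⟩
    have h : HasProd (rexp ∘ fun n => Real.log (f n)) (rexp (∑' n, Real.log (f n))) :=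
      hsum.hasSum.rexp
    have hfe : (rexp ∘ fun n => Real.log (f n)) = f :=
      funext fun n => Real.exp_log (hfpos n)
    rwa [hfe] at h
  have htend : Tendsto (fun N => ∏ n ∈ range N, f n) atTop (𝓝 (∏' n, f n)) :=
    hmult.hasProd.tendsto_prod_nat
  -- the limit of the partial products, via Gamma functions
  have hGb : (0:ℝ) < Real.Gamma b := Real.Gamma_pos_of_pos hb0
  have hG1a : (0:ℝ) < Real.Gamma (1 - a) := Real.Gamma_pos_of_pos (by linarith)
  have hR : Tendsto (fun N : ℕ => Real.GammaSeq a N * Real.GammaSeq (1-b) N /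
      (Real.GammaSeq b N * Real.GammaSeq (1-a) N)) atTop
      (𝓝 (Real.Gamma a * Real.Gamma (1-b) / (Real.Gamma b * Real.Gamma (1-a)))) :=
    ((Real.GammaSeq_tendsto_Gamma a).mul (Real.GammaSeq_tendsto_Gamma (1-b))).div
      ((Real.GammaSeq_tendsto_Gamma b).mul (Real.GammaSeq_tendsto_Gamma (1-a)))
      (mul_pos hGb hG1a).ne'
  have hquot : Tendsto (fun N : ℕ => ((N:ℝ) + 1 - b) / ((N:ℝ) + 1 - a)) atTop (𝓝 1) := by
    have h1 : Tendsto (fun N : ℕ => ((N:ℝ) + 1 - a)) atTop atTop := by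
      have := tendsto_natCast_atTop_atTop (R := ℝ)
      exact tendsto_atTop_add_const_right atTop (1 - a) this |>.congr fun N => by ring
    have h0 : Tendsto (fun N : ℕ => (a - b) / ((N:ℝ) + 1 - a)) atTop (𝓝 0) :=
      Tendsto.div_atTop tendsto_const_nhds h1
    have h2 := h0.const_add 1
    rw [add_zero] at h2
    refine h2.congr fun N => ?_
    have hNa : (0:ℝ) < (N:ℝ) + 1 - a := by
      have : (0:ℝ) ≤ (N:ℝ) := Nat.cast_nonneg N; linarith
    field_simp
    ring
  have hHlog : Tendsto (fun N : ℕ => ((harmonic N : ℝ) - Real.log N)) atTop (𝓝 γ) := by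
    have h1 := Real.tendsto_eulerMascheroniSeq
    have h2 : Tendsto (fun N : ℕ => Real.log ((N:ℝ) + 1) - Real.log N) atTop (𝓝 0) := by
      have hq : Tendsto (fun N : ℕ => 1 + 1/(N:ℝ)) atTop (𝓝 1) := by
        simpa using tendsto_one_div_atTop_nhds_zero_nat.const_add (1:ℝ)
      have hlog := hq.log one_ne_zero
      rw [Real.log_one] at hlog
      apply hlog.congr'
      filter_upwards [eventually_ge_atTop 1] with N hN
      have hN0 : (0:ℝ) < N := by exact_mod_cast hN
      rw [show (1:ℝ) + 1/(N:ℝ) = ((N:ℝ) + 1)/N by field_simp,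
        Real.log_div (by positivity) hN0.ne']
    have h3 := h1.add h2
    rw [add_zero] at h3
    refine h3.congr fun N => ?_
    simp only [Real.eulerMascheroniSeq]
    push_cast
    ring
  have hexp2 : Tendsto (fun N : ℕ => Real.exp (2*(a-b) * ((harmonic N : ℝ) - Real.log N)))
      atTop (𝓝 (Real.exp (2*(a-b)*γ))) := (hHlog.const_mul _).rexp
  have hS : Tendsto (fun N : ℕ => (a/b) * (Real.GammaSeq a N * Real.GammaSeq (1-b) N /
      (Real.GammaSeq b N * Real.GammaSeq (1-a) N)) * (((N:ℝ) + 1 - b) / ((N:ℝ) + 1 - a)) *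
      Real.exp (2*(a-b) * ((harmonic N : ℝ) - Real.log N))) atTop
      (𝓝 ((a/b) * (Real.Gamma a * Real.Gamma (1-b) / (Real.Gamma b * Real.Gamma (1-a))) * 1 *
        Real.exp (2*(a-b)*γ))) :=
    ((tendsto_const_nhds.mul hR).mul hquot).mul hexp2
  -- the partial products agree with the Gamma-sequence expression, eventually
  have heq : (fun N : ℕ => (a/b) * (Real.GammaSeq a N * Real.GammaSeq (1-b) N /
      (Real.GammaSeq b N * Real.GammaSeq (1-a) N)) * (((N:ℝ) + 1 - b) / ((N:ℝ) + 1 - a)) *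
      Real.exp (2*(a-b) * ((harmonic N : ℝ) - Real.log N)))
      =ᶠ[atTop] (fun N => ∏ n ∈ range N, f n) := by
    filter_upwards [eventually_ge_atTop 1] with N hN
    have hN0 : (0:ℝ) < (N:ℝ) := by exact_mod_cast hN
    have hNa : (0:ℝ) < (N:ℝ) + 1 - a := by linarith
    have hNb : (0:ℝ) < (N:ℝ) + 1 - b := by linarith
    have hFpos : (0:ℝ) < (N.factorial : ℝ) := by exact_mod_cast N.factorial_pos
    have hQapos : (0:ℝ) < ∏ j ∈ range (N+1), (a + (j:ℝ)) :=
      Finset.prod_pos fun j _ => by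
        have : (0:ℝ) ≤ (j:ℝ) := Nat.cast_nonneg j; linarith
    have hQbpos : (0:ℝ) < ∏ j ∈ range (N+1), (b + (j:ℝ)) :=
      Finset.prod_pos fun j _ => by
        have : (0:ℝ) ≤ (j:ℝ) := Nat.cast_nonneg j; linarith
    have hQ1apos : (0:ℝ) < ∏ j ∈ range (N+1), (1 - a + (j:ℝ)) :=
      Finset.prod_pos fun j _ => by
        have : (0:ℝ) ≤ (j:ℝ) := Nat.cast_nonneg j; linarith
    have hQ1bpos : (0:ℝ) < ∏ j ∈ range (N+1), (1 - b + (j:ℝ)) :=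
      Finset.prod_pos fun j _ => by
        have : (0:ℝ) ≤ (j:ℝ) := Nat.cast_nonneg j; linarith
    have E1 : ∏ n ∈ range N, ((n:ℝ) + 1 + b) = (∏ j ∈ range (N+1), (b + (j:ℝ))) / b := by
      rw [eq_div_iff hb0.ne', Finset.prod_range_succ']
      congr 1
      · exact Finset.prod_congr rfl fun i _ => by push_cast; ring
      · simp
    have E2 : ∏ n ∈ range N, ((n:ℝ) + 1 + a) = (∏ j ∈ range (N+1), (a + (j:ℝ))) / a := by
      rw [eq_div_iff ha0.ne', Finset.prod_range_succ']
      congr 1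
      · exact Finset.prod_congr rfl fun i _ => by push_cast; ring
      · simp
    have E3 : ∏ n ∈ range N, ((n:ℝ) + 1 - a)
        = (∏ j ∈ range (N+1), (1 - a + (j:ℝ))) / ((N:ℝ) + 1 - a) := by
      rw [eq_div_iff hNa.ne', Finset.prod_range_succ]
      congr 1
      · exact Finset.prod_congr rfl fun i _ => by push_cast; ring
      · ring
    have E4 : ∏ n ∈ range N, ((n:ℝ) + 1 - b)
        = (∏ j ∈ range (N+1), (1 - b + (j:ℝ))) / ((N:ℝ) + 1 - b) := by
      rw [eq_div_iff hNb.ne', Finset.prod_range_succ]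
      congr 1
      · exact Finset.prod_congr rfl fun i _ => by push_cast; ring
      · ring
    have hharm : ((harmonic N : ℚ) : ℝ) = ∑ i ∈ range N, ((i:ℝ) + 1)⁻¹ := by
      rw [harmonic]
      push_cast
      rfl
    have hP : ∏ n ∈ range N, f n =
        ((∏ j ∈ range (N+1), (b + (j:ℝ))) / b *
          ((∏ j ∈ range (N+1), (1 - a + (j:ℝ))) / ((N:ℝ) + 1 - a))) /
        ((∏ j ∈ range (N+1), (a + (j:ℝ))) / a *
          ((∏ j ∈ range (N+1), (1 - b + (j:ℝ))) / ((N:ℝ) + 1 - b))) *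
        Real.exp (2*(a-b) * ((harmonic N : ℚ) : ℝ)) := by
      simp only [hf_def]
      rw [Finset.prod_mul_distrib, Finset.prod_div_distrib, Finset.prod_mul_distrib,
        Finset.prod_mul_distrib, ← Real.exp_sum, E1, E2, E3, E4]
      congr 1
      rw [hharm, Finset.mul_sum]
      congr 1
    have key2 : Real.exp (Real.log N * a) * Real.exp (Real.log N * (1-b)) /
        (Real.exp (Real.log N * b) * Real.exp (Real.log N * (1-a)))
        = Real.exp (2*(a-b) * Real.log N) := by
      rw [← Real.exp_add, ← Real.exp_add, ← Real.exp_sub]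
      congr 1
      ring
    have hGSr : Real.GammaSeq a N * Real.GammaSeq (1-b) N /
        (Real.GammaSeq b N * Real.GammaSeq (1-a) N)
        = Real.exp (2*(a-b) * Real.log N) *
          ((∏ j ∈ range (N+1), (b + (j:ℝ))) * (∏ j ∈ range (N+1), (1 - a + (j:ℝ))) /
           ((∏ j ∈ range (N+1), (a + (j:ℝ))) * (∏ j ∈ range (N+1), (1 - b + (j:ℝ))))) := by
      simp only [Real.GammaSeq]
      rw [Real.rpow_def_of_pos hN0 a, Real.rpow_def_of_pos hN0 (1-b),
        Real.rpow_def_of_pos hN0 b, Real.rpow_def_of_pos hN0 (1-a)]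
      rw [aux_frac _ _ _ _ _ _ _ _ _ (Real.exp_ne_zero _) (Real.exp_ne_zero _)
        hFpos.ne' hQapos.ne' hQ1bpos.ne' hQbpos.ne' hQ1apos.ne', key2]
    have hE : Real.exp (2*(a-b) * ((harmonic N : ℚ) : ℝ) - 2*(a-b) * Real.log N)
        = Real.exp (2*(a-b) * ((harmonic N : ℚ) : ℝ)) / Real.exp (2*(a-b) * Real.log N) :=
      Real.exp_sub _ _
    rw [hP, hGSr, show 2*(a-b) * (((harmonic N : ℚ) : ℝ) - Real.log N)
      = 2*(a-b) * ((harmonic N : ℚ) : ℝ) - 2*(a-b) * Real.log N by ring, hE]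
    field_simp
  have hlim : Tendsto (fun N => ∏ n ∈ range N, f n) atTop
      (𝓝 ((a/b) * (Real.Gamma a * Real.Gamma (1-b) / (Real.Gamma b * Real.Gamma (1-a))) * 1 *
        Real.exp (2*(a-b)*γ))) := hS.congr' heq
  have htprod : (∏' n, f n) = (a/b) *
      (Real.Gamma a * Real.Gamma (1-b) / (Real.Gamma b * Real.Gamma (1-a))) * 1 *
      Real.exp (2*(a-b)*γ) := tendsto_nhds_unique htend hlim
  rw [htprod]
  have hxM : (x - M)/(x + M) = b/a := by
    have hxM0 : (0:ℝ) < x + M := by linarith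
    rw [ha_def, hb_def]
    rw [div_div_div_eq, mul_comm, mul_div_mul_left _ _ hL0.ne']
  have hGa0 : Real.Gamma a ≠ 0 := (Real.Gamma_pos_of_pos ha0).ne'
  have hexpeq : Real.exp (4 * γ * M / L) = Real.exp (2*(a-b)*γ) := by
    congr 1
    rw [ha_def, hb_def]
    field_simp
    ring
  rw [hxM, hexpeq]
  field_simp
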